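/- Let q = 2^m, σ = 2^k, and let F ∈ SQH(ℓ, 2^m) with core F_{2^d}, m/d even, such that the induced map on P^(ℓ-1)(F_{2^m}) is bijective. Then for every nonzero a ∈ (F_{2^m})^ℓ, the kernel of the linear map L_a(x) = F(x+a) + F(x) + F(a) is exactly a·F_{2^d} = {λa : λ ∈ F_{2^d}}, a set of size 2^d. -/

import Mathlib

section Aux

lemma bezout_nat (k m : ℕ) (hk : 0 < k) (hm : 0 < m) :
    ∃ u v : ℕ, u * k = Nat.gcd k m + v * m := by
  set A := Nat.gcdA k m
  set B := Nat.gcdB k m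
  have hbez : (Nat.gcd k m : ℤ) = k * A + m * B := Nat.gcd_eq_gcd_ab k m
  set t : ℤ := A.natAbs + B.natAbs + 1 with ht
  have hA1 : -A ≤ (A.natAbs : ℤ) := by simpa using Int.le_natAbs (a := -A)
  have hB1 : B ≤ (B.natAbs : ℤ) := Int.le_natAbs
  have hA0 : (0:ℤ) ≤ A.natAbs := Int.natCast_nonneg _
  have hB0 : (0:ℤ) ≤ B.natAbs := Int.natCast_nonneg _
  have htA : A + t * m ≥ 0 := by
    have hm1 : (1 : ℤ) ≤ m := by exact_mod_cast hm
    nlinarith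
  have htB : t * k - B ≥ 0 := by
    have hk1 : (1 : ℤ) ≤ k := by exact_mod_cast hk
    nlinarith
  refine ⟨(A + t * m).toNat, (t * k - B).toNat, ?_⟩
  have h1 : ((A + t * m).toNat : ℤ) = A + t * m := Int.toNat_of_nonneg htA
  have h2 : ((t * k - B).toNat : ℤ) = t * k - B := Int.toNat_of_nonneg htB
  have : ((A + t * m).toNat : ℤ) * k = Nat.gcd k m + ((t * k - B).toNat : ℤ) * m := by
    rw [h1, h2]; linear_combination (-1 : ℤ) * hbez
  exact_mod_cast this

lemma two_pow_sub_one_dvd {a b : ℕ} (h : a ∣ b) : 2^a - 1 ∣ 2^b - 1 := by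
  obtain ⟨c, rfl⟩ := h
  simpa [one_pow, ← pow_mul] using Nat.sub_dvd_pow_sub_pow (2^a) 1 c

lemma nonvanish {K : Type*} [Field K] [Fintype K] {ℓ : ℕ}
    (Fn : (Fin ℓ → K) → (Fin ℓ → K)) (e : ℕ)
    (hhom : ∀ (c : K) (x : Fin ℓ → K), Fn (c • x) = c ^ e • Fn x)
    (hsurj : ∀ y : Fin ℓ → K, y ≠ 0 → ∃ x, x ≠ 0 ∧ ∃ c : K, c ≠ 0 ∧ Fn x = c • y) :
    ∀ a : Fin ℓ → K, a ≠ 0 → Fn a ≠ 0 := by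
  intro a ha hFa
  have hnt : Nontrivial (Fin ℓ → K) := ⟨a, 0, ha⟩
  classical
  choose g hg0 c hc0 hgc using hsurj
  have hfin : Finite (Projectivization K (Fin ℓ → K)) := Quotient.finite _
  let h : Projectivization K (Fin ℓ → K) → Projectivization K (Fin ℓ → K) := fun p =>
    Projectivization.mk K (g p.rep p.rep_nonzero) (hg0 p.rep p.rep_nonzero)
  have hinj' : Function.Injective h := by
    intro p q hpq
    rw [show h p = Projectivization.mk K (g p.rep p.rep_nonzero) (hg0 p.rep p.rep_nonzero) from rfl,
      show h q = Projectivization.mk K (g q.rep q.rep_nonzero) (hg0 q.rep q.rep_nonzero) from rfl,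
      Projectivization.mk_eq_mk_iff] at hpq
    obtain ⟨u, hu⟩ := hpq
    have h1 : Fn (g p.rep p.rep_nonzero) = c p.rep p.rep_nonzero • p.rep := hgc _ _
    have h2 : Fn ((u : K) • g q.rep q.rep_nonzero) = ((u:K)^e * c q.rep q.rep_nonzero) • q.rep := by
      rw [hhom, hgc, smul_smul]
    rw [show ((u : K) • g q.rep q.rep_nonzero) = (u • g q.rep q.rep_nonzero) from rfl, hu] at h2
    have hrep : p.rep = ((c p.rep p.rep_nonzero)⁻¹ * ((u:K)^e * c q.rep q.rep_nonzero)) • q.rep := by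
      rw [mul_smul, ← h2, h1, inv_smul_smul₀ (hc0 _ _)]
    have hne : (c p.rep p.rep_nonzero)⁻¹ * ((u:K)^e * c q.rep q.rep_nonzero) ≠ 0 :=
      mul_ne_zero (inv_ne_zero (hc0 _ _)) (mul_ne_zero (pow_ne_zero _ (Units.ne_zero u)) (hc0 _ _))
    have heq : Projectivization.mk K p.rep p.rep_nonzero
        = Projectivization.mk K q.rep q.rep_nonzero := by
      rw [Projectivization.mk_eq_mk_iff]
      refine ⟨Units.mk0 _ hne, ?_⟩
      simp only [Units.smul_def, Units.val_mk0]; exact hrep.symm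
    rwa [Projectivization.mk_rep, Projectivization.mk_rep] at heq
  have hsurj' : Function.Surjective h := Finite.surjective_of_injective hinj'
  obtain ⟨p, hp⟩ := hsurj' (Projectivization.mk K a ha)
  rw [show h p = Projectivization.mk K (g p.rep p.rep_nonzero) (hg0 p.rep p.rep_nonzero) from rfl,
    Projectivization.mk_eq_mk_iff] at hp
  obtain ⟨u, hu⟩ := hp
  have hz : Fn (g p.rep p.rep_nonzero) = 0 := by
    rw [← hu, show ((u : Kˣ) • a) = ((u : K) • a) from rfl, hhom, hFa, smul_zero]
  rw [hgc] at hz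
  rcases smul_eq_zero.mp hz with h' | h'
  · exact hc0 _ _ h'
  · exact p.rep_nonzero h'

lemma card_subfield {K : Type*} [Field K] [Fintype K] {m d : ℕ} (hm : 0 < m) (hd0 : 0 < d)
    (hdm : d ∣ m) (hcard : Fintype.card K = 2 ^ m) :
    Nat.card {lam : K // lam ^ (2^d) = lam} = 2 ^ d := by
  classical
  set n := 2^d - 1 with hn
  have h2d : 1 ≤ 2^d := Nat.one_le_two_pow
  have h2d2 : 2 ≤ 2^d := Nat.one_lt_two_pow_iff.mpr (by omega)
  have hn0 : 0 < n := by omega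
  have hN0 : 0 < 2^m - 1 := by
    have : 2 ≤ 2^m := Nat.one_lt_two_pow_iff.mpr (by omega)
    omega
  have hndvd : n ∣ 2^m - 1 := two_pow_sub_one_dvd hdm
  have hcardu : Fintype.card Kˣ = 2^m - 1 := by
    rw [Fintype.card_units, hcard]
  obtain ⟨g, hg⟩ := IsCyclic.exists_generator (α := Kˣ)
  have horder : orderOf g = 2^m - 1 := by
    rw [orderOf_eq_card_of_forall_mem_zpowers hg, Nat.card_eq_fintype_card, hcardu]
  set ζu : Kˣ := g ^ ((2^m - 1) / n) with hζu
  have hdvd2 : (2^m - 1) / n ∣ 2^m - 1 := Nat.div_dvd_of_dvd hndvd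
  have hoζ : orderOf ζu = n := by
    rw [hζu, orderOf_pow, horder, Nat.gcd_eq_right hdvd2, Nat.div_div_self hndvd (by omega)]
  have hprim : IsPrimitiveRoot (ζu : K) n := by
    constructor
    · rw [← Units.val_pow_eq_pow_val, ← hoζ, pow_orderOf_eq_one, Units.val_one]
    · intro l hl
      rw [← hoζ]
      apply orderOf_dvd_of_pow_eq_one
      ext
      rw [Units.val_pow_eq_pow_val, hl, Units.val_one]
  have hroots : (Polynomial.nthRootsFinset n (1 : K)).card = n := hprim.card_nthRootsFinset
  have hiff : ∀ lam : K, (lam ^ (2^d) = lam) ↔ (lam = 0 ∨ lam ^ n = 1) := by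
    intro lam
    constructor
    · intro h
      by_cases h0 : lam = 0
      · exact Or.inl h0
      · right
        have : lam ^ n * lam = 1 * lam := by
          rw [one_mul, ← pow_succ]
          have hnn : n + 1 = 2^d := by omega
          rw [hnn, h]
        exact mul_right_cancel₀ h0 this
    · rintro (rfl | h)
      · exact zero_pow (by positivity)
      · have hnn : lam ^ (2^d) = lam ^ (n+1) := by congr 1; omega
        rw [hnn, pow_succ, h, one_mul]
  have hcc : Nat.card {lam : K // lam ^ (2^d) = lam}
      = (Finset.univ.filter (fun lam : K => lam ^ (2^d) = lam)).card := by
    rw [Nat.card_eq_fintype_card, Fintype.card_subtype]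
  rw [hcc]
  have hset : (Finset.univ.filter (fun lam : K => lam ^ (2^d) = lam))
      = insert (0 : K) (Polynomial.nthRootsFinset n (1 : K)) := by
    ext lam
    simp only [Finset.mem_filter, Finset.mem_univ, true_and, Finset.mem_insert,
      Polynomial.mem_nthRootsFinset hn0 (1 : K)]
    exact hiff lam
  rw [hset, Finset.card_insert_of_notMem, hroots]
  · omega
  · intro hmem
    rw [Polynomial.mem_nthRootsFinset hn0 (1 : K)] at hmem
    rw [zero_pow (by omega)] at hmem
    exact zero_ne_one hmem

end Aux

/-- for `F ∈ SQH(ℓ, 2^m)` with core `F_{2^d}`, `m/d` even, inducing a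
bijection of `P^(ℓ-1)(F_{2^m})`, the kernel of `L_a(x) = F(x+a) + F(x) + F(a)` is
exactly `a·F_{2^d}`, a set of size `2^d`, for every nonzero `a`. -/
theorem stmt13 (m k d ℓ : ℕ) (hm : 0 < m) (hk : 0 < k) (hℓ : 0 < ℓ)
    (hd : d = Nat.gcd k m) (heven : Even (m / d))
    (K : Type*) [Field K] [Fintype K] (hcard : Fintype.card K = 2 ^ m)
    (Fn : (Fin ℓ → K) → (Fin ℓ → K))
    -- F is σ-semiquadratic homogeneous with σ = 2^k
    (hsq : ∃ C : Fin ℓ → Matrix (Fin ℓ) (Fin ℓ) K,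
      ∀ x i, Fn x i = ∑ s, ∑ t, x s * C i s t * (x t) ^ (2 ^ k))
    -- injectivity of the induced map on projective space
    (hinj : ∀ x y : Fin ℓ → K, x ≠ 0 → y ≠ 0 →
      (∃ c : K, c ≠ 0 ∧ Fn x = c • Fn y) → ∃ c : K, c ≠ 0 ∧ x = c • y)
    -- surjectivity of the induced map on projective space
    (hsurj : ∀ y : Fin ℓ → K, y ≠ 0 → ∃ x, x ≠ 0 ∧ ∃ c : K, c ≠ 0 ∧ Fn x = c • y) :
    ∀ a : Fin ℓ → K, a ≠ 0 →
      ({x : Fin ℓ → K | Fn (x + a) + Fn x + Fn a = 0}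
          = {x : Fin ℓ → K | ∃ lam : K, lam ^ (2 ^ d) = lam ∧ x = lam • a}) ∧
      Nat.card {x : Fin ℓ → K // Fn (x + a) + Fn x + Fn a = 0} = 2 ^ d := by
  classical
  intro a ha
  obtain ⟨C, hC⟩ := hsq
  -- characteristic 2
  have hp2 : CharP K 2 := by
    obtain ⟨n, hp, hcard'⟩ := FiniteField.card K (ringChar K)
    have hrc : ringChar K = 2 := by
      have hdpow : ringChar K ∣ 2^m := by
        rw [← hcard, hcard']
        exact dvd_pow_self _ (by exact_mod_cast n.pos.ne')
      have := hp.dvd_of_dvd_pow hdpow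
      exact (Nat.prime_dvd_prime_iff_eq hp Nat.prime_two).mp this
    rw [← hrc]; exact ringChar.charP K
  haveI := hp2
  haveI : Fact (Nat.Prime 2) := ⟨Nat.prime_two⟩
  have h2 : ∀ z : K, z + z = 0 := by
    intro z
    have h0 : (2:K) = 0 := by exact_mod_cast (CharP.cast_eq_zero K 2)
    linear_combination z * h0
  -- numerical facts about d, k, m
  have hd0 : 0 < d := by
    rw [hd]; exact Nat.gcd_pos_of_pos_left m hk
  have hdk : d ∣ k := hd ▸ Nat.gcd_dvd_left k m
  have hdm : d ∣ m := hd ▸ Nat.gcd_dvd_right k m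
  have hkd_odd : Odd (k / d) := by
    rcases Nat.even_or_odd (k / d) with he | ho
    · exfalso
      have hcop : Nat.Coprime (k / Nat.gcd k m) (m / Nat.gcd k m) :=
        Nat.coprime_div_gcd_div_gcd (hd ▸ hd0)
      rw [← hd] at hcop
      have h2k : 2 ∣ k / d := he.two_dvd
      have h2m : 2 ∣ m / d := heven.two_dvd
      have := Nat.dvd_gcd h2k h2m
      rw [hcop.gcd_eq_one] at this
      omega
    · exact ho
  have hk_eq : k = d * (k / d) := by
    rw [mul_comm]; exact (Nat.div_mul_cancel hdk).symm
  have hm2d : 2 * d ∣ m := by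
    obtain ⟨j, hj⟩ := heven
    refine ⟨j, ?_⟩
    rw [← Nat.div_mul_cancel hdm, hj]; ring
  -- the bilinear-ish form
  set σ' : ℕ := 2^k with hσ'
  have hσ1 : 1 ≤ σ' := Nat.one_le_two_pow
  let P : (Fin ℓ → K) → (Fin ℓ → K) → (Fin ℓ → K) := fun u v i => ∑ s, ∑ t, u s * C i s t * (v t)^σ'
  have hPF : ∀ u, Fn u = P u u := fun u => funext (hC u)
  have hP1 : ∀ u v w, P (u + v) w = P u w + P v w := by
    intro u v w; funext i
    simp only [P, Pi.add_apply, add_mul, Finset.sum_add_distrib]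
  have hP2 : ∀ u v w, P u (v + w) = P u v + P u w := by
    intro u v w; funext i
    simp only [P, Pi.add_apply]
    have : ∀ t : Fin ℓ, (v t + w t)^σ' = (v t)^σ' + (w t)^σ' := fun t => add_pow_char_pow _ _ 2 k
    simp only [this, mul_add, Finset.sum_add_distrib]
  have hP3 : ∀ (c : K) u v, P (c • u) v = c • P u v := by
    intro c u v; funext i
    simp only [P, Pi.smul_apply, smul_eq_mul, Finset.mul_sum, mul_assoc]
  have hP4 : ∀ (c : K) u v, P u (c • v) = c^σ' • P u v := by
    intro c u v; funext i
    simp only [P, Pi.smul_apply, smul_eq_mul, Finset.mul_sum, mul_pow]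
    refine Finset.sum_congr rfl fun s _ => Finset.sum_congr rfl fun t _ => by ring
  have key : ∀ x : Fin ℓ → K, Fn (x + a) + Fn x + Fn a = P x a + P a x := by
    intro x
    rw [hPF (x+a), hPF x, hPF a, hP1, hP2, hP2]
    funext i
    simp only [Pi.add_apply]
    linear_combination h2 ((P x x) i) + h2 ((P a a) i)
  -- homogeneity and nonvanishing
  have hhom : ∀ (c : K) x, Fn (c • x) = c ^ (σ' + 1) • Fn x := by
    intro c x
    rw [hPF, hPF, hP3, hP4, smul_smul]
    congr 1
    ring
  have hFa0 : Fn a ≠ 0 := nonvanish Fn (σ' + 1) hhom hsurj a ha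
  have haj : ∃ j, a j ≠ 0 := by
    by_contra hno
    push_neg at hno
    exact ha (funext fun j => hno j)
  -- iteration lemma
  have hiter : ∀ (w : K) (aa t : ℕ), w^(2^aa) = w → w^(2^(aa*t)) = w := by
    intro w aa t hw
    induction t with
    | zero => simp
    | succ t ih =>
      have : aa * (t+1) = aa * t + aa := by ring
      rw [this, pow_add, pow_mul, ih, hw]
  -- the set equality
  have hset : ({x : Fin ℓ → K | Fn (x + a) + Fn x + Fn a = 0}
      = {x : Fin ℓ → K | ∃ lam : K, lam ^ (2 ^ d) = lam ∧ x = lam • a}) := by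
    ext x
    simp only [Set.mem_setOf_eq]
    constructor
    · intro hx
      have hx' : P x a + P a x = 0 := by rw [← key]; exact hx
      have hPax : P a x = P x a := by
        funext i
        have hi := congrFun hx' i
        simp only [Pi.add_apply, Pi.zero_apply] at hi
        linear_combination hi - h2 ((P x a) i)
      by_cases hprop : ∃ ν : K, x = ν • a
      · obtain ⟨ν, rfl⟩ := hprop
        have hcalc : P (ν • a) a + P a (ν • a) = (ν + ν^σ') • P a a := by
          rw [hP3, hP4, add_smul]
        rw [hcalc] at hx'
        have hPaa : P a a ≠ 0 := by rw [← hPF]; exact hFa0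
        have hν : ν + ν^σ' = 0 := by
          rcases smul_eq_zero.mp hx' with h' | h'
          · exact h'
          · exact absurd h' hPaa
        have hνσ : ν^(2^k) = ν := by
          rw [← hσ']
          linear_combination hν - h2 ν
        obtain ⟨u, v, huv⟩ := bezout_nat k m hk hm
        have h1 : ν^(2^(u*k)) = ν := by
          have := hiter ν k u hνσ
          rwa [mul_comm] at this
        have hmK : ν^(2^m) = ν := by rw [← hcard]; exact FiniteField.pow_card ν
        have h2' : ν^(2^(v*m)) = ν := by
          have := hiter ν m v hmK
          rwa [mul_comm] at this
        have hfinal : ν^(2^d) = ν := by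
          have e1 : (2:ℕ)^(u*k) = 2^(v*m) * 2^d := by
            rw [← pow_add]
            congr 1
            rw [hd]
            omega
          calc ν^(2^d) = (ν^(2^(v*m)))^(2^d) := by rw [h2']
            _ = ν^(2^(v*m) * 2^d) := (pow_mul _ _ _).symm
            _ = ν^(2^(u*k)) := by rw [← e1]
            _ = ν := h1
        exact ⟨ν, hfinal, rfl⟩
      · exfalso
        have hx0 : x ≠ 0 := by
          intro h0
          exact hprop ⟨0, by rw [h0, zero_smul]⟩
        -- arithmetic facts
        have h2d : 1 ≤ 2^d := Nat.one_le_two_pow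
        have h2d2 : 2 ≤ 2^d := Nat.one_lt_two_pow_iff.mpr (by omega)
        have h2k2 : 2 ≤ 2^k := Nat.one_lt_two_pow_iff.mpr (by omega)
        have h2m2 : 2 ≤ 2^m := Nat.one_lt_two_pow_iff.mpr (by omega)
        have h22d : 2^d < 2^(2*d) := Nat.pow_lt_pow_right one_lt_two (by omega)
        have hMdef : (2^d - 1) * (2^d + 1) = 2^(2*d) - 1 := by
          have hsq : 2^(2*d) = 2^d * 2^d := by rw [two_mul, pow_add]
          rw [hsq]
          have hone : 1 ≤ 2^d * 2^d := by
            have : 0 < 2^d * 2^d := by positivity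
            omega
          zify [h2d, hone]
          ring
        have hMk : ¬ (2^(2*d) - 1 ∣ 2^k - 1) := by
          intro hdiv
          obtain ⟨s, hs⟩ := hkd_odd
          have ha1 : 1 ≤ 2^(2*d) := Nat.one_le_two_pow
          have hb1 : 1 ≤ (2:ℕ)^k := Nat.one_le_two_pow
          zify [ha1, hb1] at hdiv
          have key3 : ((2:ℤ)^(2*d) - 1) ∣ ((2:ℤ)^(2*d))^s - 1 := by
            simpa using sub_dvd_pow_sub_pow ((2:ℤ)^(2*d)) 1 s
          have hkeZ : (2:ℤ)^k = 2^d * ((2:ℤ)^(2*d))^s := by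
            rw [← pow_mul, ← pow_add]
            congr 1
            rw [hk_eq, hs]
            ring
          have hdd : ((2:ℤ)^(2*d) - 1) ∣ (2:ℤ)^d - 1 := by
            have h4 : (2:ℤ)^d - 1 = ((2:ℤ)^k - 1) - 2^d * (((2:ℤ)^(2*d))^s - 1) := by
              rw [hkeZ]; ring
            rw [h4]
            exact dvd_sub hdiv (Dvd.dvd.mul_left key3 _)
          have hpos : (0:ℤ) < 2^d - 1 := by
            have : ((2:ℕ) ≤ 2^d) := h2d2
            have : ((2:ℕ):ℤ) ≤ ((2:ℕ)^d : ℤ) := by exact_mod_cast this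
            push_cast at this
            linarith
          have hle := Int.le_of_dvd hpos hdd
          have hlt : ((2:ℤ))^d < 2^(2*d) := by exact_mod_cast h22d
          linarith
        have hMm : 2^(2*d) - 1 ∣ 2^m - 1 := two_pow_sub_one_dvd hm2d
        have hdk1 : 2^d - 1 ∣ 2^k - 1 := two_pow_sub_one_dvd hdk
        have hE : 2^d + 1 ∣ 2^k + 1 := by
          have := hkd_odd.nat_add_dvd_pow_add_pow (2^d) 1
          simpa [one_pow, ← pow_mul, ← hk_eq] using this
        -- build lam and mu
        have hcardu : Fintype.card Kˣ = 2^m - 1 := by rw [Fintype.card_units, hcard]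
        obtain ⟨g, hg⟩ := IsCyclic.exists_generator (α := Kˣ)
        have horder : orderOf g = 2^m - 1 := by
          rw [orderOf_eq_card_of_forall_mem_zpowers hg, Nat.card_eq_fintype_card, hcardu]
        set M : ℕ := 2^(2*d) - 1 with hM
        set e' : ℕ := (2^m - 1) / M with he'
        have heM : e' * M = 2^m - 1 := Nat.div_mul_cancel hMm
        have he'0 : e' ≠ 0 := by
          intro h0
          rw [h0, zero_mul] at heM
          omega
        set lamu : Kˣ := g ^ e' with hlamu
        set muu : Kˣ := lamu ^ (2^k - 1) with hmuu
        have hmuu_g : muu = g ^ (e' * (2^k - 1)) := by rw [hmuu, hlamu, ← pow_mul]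
        have hmuu_ne : muu ≠ 1 := by
          intro h1
          rw [hmuu_g] at h1
          have := orderOf_dvd_of_pow_eq_one h1
          rw [horder, ← heM] at this
          have := (mul_dvd_mul_iff_left (a := e') (by exact_mod_cast he'0 : (e' : ℕ) ≠ 0)).mp this
          exact hMk this
        have hmuu_pow : muu ^ (2^d + 1) = 1 := by
          rw [hmuu_g, ← pow_mul]
          apply orderOf_dvd_iff_pow_eq_one.mp
          rw [horder, ← heM]
          rw [mul_assoc]
          apply mul_dvd_mul_left
          exact hMdef ▸ mul_dvd_mul_right hdk1 _
        set lam : K := (lamu : K) with hlam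
        set mu : K := (muu : K) with hmu
        have hlam0 : lam ≠ 0 := Units.ne_zero _
        have hmu0 : mu ≠ 0 := Units.ne_zero _
        have hmu1 : mu ≠ 1 := by
          intro h1
          exact hmuu_ne (Units.ext (by rw [← hmu, h1, Units.val_one]))
        have hmupow : mu ^ (2^d + 1) = 1 := by
          rw [hmu, ← Units.val_pow_eq_pow_val, hmuu_pow, Units.val_one]
        have hlamsig : lam ^ σ' = lam * mu := by
          rw [hσ', hlam, hmu, ← Units.val_pow_eq_pow_val, ← Units.val_mul]
          congr 1
          rw [hmuu, mul_comm, ← pow_succ]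
          congr 1
          omega
        have hmusig : mu ^ σ' * mu = 1 := by
          have hmupk : mu ^ (2^k + 1) = 1 := by
            obtain ⟨w, hw⟩ := hE
            rw [hw, pow_mul, hmupow, one_pow]
          rw [hσ']
          rw [pow_succ] at hmupk
          exact hmupk
        -- coefficients agree
        have hc1 : lam ^ σ' + lam = (lam * mu) ^ σ' + lam * mu := by
          rw [mul_pow, hlamsig]
          linear_combination (-lam) * hmusig
        have hc2 : lam * lam ^ σ' = (lam * mu) * ((lam * mu) ^ σ') := by
          rw [mul_pow, hlamsig]
          linear_combination (-(lam * lam * mu)) * hmusig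
        -- the two vectors with equal images
        have hFu : ∀ c0 : K, Fn (a + c0 • x)
            = P a a + (c0 ^ σ' + c0) • P x a + (c0 * c0 ^ σ') • P x x := by
          intro c0
          rw [hPF, hP1, hP2, hP2, hP3, hP4, hP3, hP4, hPax, smul_smul]
          funext i
          simp only [Pi.add_apply, Pi.smul_apply, smul_eq_mul]
          ring
        have hFuv : Fn (a + lam • x) = Fn (a + (lam * mu) • x) := by
          rw [hFu, hFu, hc1, hc2]
        have hlm0 : lam * mu ≠ 0 := mul_ne_zero hlam0 hmu0
        have hne_gen : ∀ c0 : K, c0 ≠ 0 → a + c0 • x ≠ 0 := by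
          intro c0 hc0 h0
          apply hprop
          refine ⟨-c0⁻¹, ?_⟩
          have h0' : c0 • x + a = 0 := by rw [add_comm]; exact h0
          have hxa : c0 • x = -a := eq_neg_of_add_eq_zero_left h0'
          have hx1 : x = c0⁻¹ • (c0 • x) := (inv_smul_smul₀ hc0 x).symm
          rw [hxa, smul_neg, ← neg_smul] at hx1
          exact hx1
        obtain ⟨c, hcne, hcv⟩ := hinj (a + lam • x) (a + (lam * mu) • x)
          (hne_gen lam hlam0) (hne_gen _ hlm0) ⟨1, one_ne_zero, by rw [one_smul, hFuv]⟩
        have hcv' : a + lam • x = c • a + (c * (lam * mu)) • x := by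
          rw [hcv, smul_add, smul_smul]
        have key2 : ∀ i, (1 - c) * a i = (c * (lam * mu) - lam) * x i := by
          intro i
          have hi := congrFun hcv' i
          simp only [Pi.add_apply, Pi.smul_apply, smul_eq_mul] at hi
          linear_combination hi
        by_cases hc1 : c = 1
        · have hcoeff : c * (lam * mu) - lam ≠ 0 := by
            rw [hc1, one_mul]
            intro h0
            have h1 := sub_eq_zero.mp h0
            have : mu = 1 := by
              have := mul_left_cancel₀ hlam0 (h1.trans (mul_one lam).symm)
              exact this
            exact hmu1 this
          have hxz : x = 0 := by
            funext i
            have h0 : (c * (lam * mu) - lam) * x i = 0 := by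
              rw [← key2 i, hc1]; ring
            rcases mul_eq_zero.mp h0 with h' | h'
            · exact absurd h' hcoeff
            · simpa using h'
          exact hx0 hxz
        · have hcoeff : (1 : K) - c ≠ 0 := sub_ne_zero.mpr (Ne.symm hc1)
          set s : K := (1 - c)⁻¹ * (c * (lam * mu) - lam) with hs
          have has : a = s • x := by
            funext i
            simp only [Pi.smul_apply, smul_eq_mul]
            calc a i = (1 - c)⁻¹ * ((1 - c) * a i) := (inv_mul_cancel_left₀ hcoeff _).symm
              _ = (1 - c)⁻¹ * ((c * (lam * mu) - lam) * x i) := by rw [key2 i]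
              _ = s * x i := by rw [hs]; ring
          have hs0 : s ≠ 0 := by
            intro h0
            rw [h0, zero_smul] at has
            exact ha has
          apply hprop
          refine ⟨s⁻¹, ?_⟩
          rw [has, smul_smul, inv_mul_cancel₀ hs0, one_smul]
    · rintro ⟨lam, hlam, rfl⟩
      rw [key]
      have hlamk : lam ^ (2^k) = lam := by
        have := hiter lam d (k / d) hlam
        rwa [← hk_eq] at this
      rw [hP3, hP4, ← hσ'] at *
      rw [hlamk]
      funext i
      simp only [Pi.add_apply, Pi.smul_apply, smul_eq_mul, Pi.zero_apply]
      exact h2 _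
  refine ⟨hset, ?_⟩
  have hpred : ∀ x : Fin ℓ → K, (Fn (x + a) + Fn x + Fn a = 0)
      ↔ (∃ lam : K, lam ^ (2 ^ d) = lam ∧ x = lam • a) := fun x => Set.ext_iff.mp hset x
  rw [Nat.card_congr (Equiv.subtypeEquivRight hpred)]
  obtain ⟨j, hj⟩ := haj
  have hbij : Function.Bijective (fun p : {lam : K // lam ^ (2^d) = lam} =>
      (⟨p.1 • a, p.1, p.2, rfl⟩ : {x : Fin ℓ → K // ∃ lam : K, lam ^ (2^d) = lam ∧ x = lam • a})) := by
    constructor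
    · intro p q hpq
      have := congrFun (congrArg Subtype.val hpq) j
      simp only [Pi.smul_apply, smul_eq_mul] at this
      exact Subtype.ext (mul_right_cancel₀ hj this)
    · rintro ⟨x, lam, hl, rfl⟩
      exact ⟨⟨lam, hl⟩, rfl⟩
  rw [← Nat.card_congr (Equiv.ofBijective _ hbij)]
  exact card_subfield hm hd0 hdm hcard
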